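/- If (Z_U, Z_V) ~ BC₊(ψ), then for every positive integer n, (Z_U^n, Z_V^n) ~ BC₊(ψ^n). Consequently, as n → ∞ the distribution of (Z_U^n, Z_V^n) converges weakly to the uniform distribution on the torus Ω × Ω. -/

import Mathlib

open MeasureTheory Real

/-- Arc-length measure on the unit circle `Ω = {z : ℂ | |z| = 1}`, obtained as the
image of Lebesgue measure on `(0, 2π]` under `θ ↦ exp(iθ)`; it has total mass `2π`. -/
noncomputable def circleMeasure : Measure ℂ :=
  Measure.map (fun θ : ℝ => Complex.exp (θ * Complex.I))
    (volume.restrict (Set.Ioc 0 (2 * Real.pi)))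

/-- The density of the `BC₊(ψ)` model on `Ω × Ω`:
`c(z_u, z_v) = (1/(4π²)) (1-|ψ|²)/|1 - ψ z_v conj z_u|²`. -/
noncomputable def bcDensity (ψ : ℂ) (p : ℂ × ℂ) : ℝ :=
  (1 / (4 * Real.pi ^ 2)) * (1 - ‖ψ‖ ^ 2)
    / ‖1 - ψ * p.2 * (starRingEnd ℂ) p.1‖ ^ 2

/-- The `BC₊(ψ)` distribution on the torus `Ω × Ω`. -/
noncomputable def BCplus (ψ : ℂ) : Measure (ℂ × ℂ) :=
  (circleMeasure.prod circleMeasure).withDensity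
    (fun p => ENNReal.ofReal (bcDensity ψ p))


open Real Finset MeasureTheory ENNReal


noncomputable def cexpI (θ : ℝ) : ℂ := Complex.exp (θ * Complex.I)

lemma cexpI_add (x y : ℝ) : cexpI (x + y) = cexpI x * cexpI y := by
  simp [cexpI, ← Complex.exp_add]; ring_nf

lemma cexpI_abs (x : ℝ) : ‖cexpI x‖ = 1 := Complex.norm_exp_ofReal_mul_I x

lemma cexpI_nat_mul (n : ℕ) (x : ℝ) : cexpI (n * x) = (cexpI x) ^ n := by
  rw [cexpI, cexpI, ← Complex.exp_nat_mul]
  push_cast; ring_nf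

lemma cexpI_two_pi (k : ℕ) : cexpI (2 * π * k) = 1 := by
  have := Complex.exp_int_mul_two_pi_mul_I (k : ℤ)
  rw [cexpI]
  rw [← this]
  push_cast; ring_nf

lemma cexpI_periodic (x : ℝ) (k : ℕ) : cexpI (x + 2 * π * k) = cexpI x := by
  rw [cexpI_add, cexpI_two_pi, mul_one]

/-- geometric sum identity -/
lemma sum_inv_one_sub (n : ℕ) (hn : 0 < n) (a : ℂ) (ha : ‖a‖ < 1) :
    ∑ m ∈ range n, (1 - a * cexpI (2 * π * m / n))⁻¹ = n / (1 - a ^ n) := by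
  have hω : ∀ m : ℕ, cexpI (2 * π * m / n) = cexpI (2 * π / n) ^ m := by
    intro m
    rw [← cexpI_nat_mul]
    congr 1; field_simp
  set ω := cexpI (2 * π / n) with hωdef
  have hωn : ω ^ n = 1 := by
    rw [← hω n]
    have : 2 * π * n / n = 2 * π * (1:ℕ) := by field_simp; norm_num
    rw [this, cexpI_two_pi]
  have habsω : ‖ω‖ = 1 := cexpI_abs _
  have hne : ∀ m : ℕ, 1 - a * ω ^ m ≠ 0 := by
    intro m h
    have : ‖a * ω ^ m‖ < 1 := by
      rw [norm_mul, norm_pow, habsω, one_pow, mul_one]; exact ha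
    rw [sub_eq_zero] at h
    rw [← h] at this
    simp at this
  have han : a ^ n ≠ 1 := by
    intro h
    have : ‖a ^ n‖ < 1 := by
      rw [norm_pow]; exact pow_lt_one₀ (norm_nonneg a) ha hn.ne'
    rw [h] at this; simp at this
  have key : (1 - a ^ n) * ∑ m ∈ range n, (1 - a * cexpI (2 * π * m / n))⁻¹ = n := by
    rw [Finset.mul_sum]
    have hterm : ∀ m ∈ range n, (1 - a ^ n) * (1 - a * cexpI (2 * π * m / n))⁻¹
        = ∑ i ∈ range n, (a * ω ^ m) ^ i := by
      intro m _
      rw [hω m]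
      have hx : a * ω ^ m ≠ 1 := by
        intro h
        exact hne m (by rw [h]; ring)
      rw [geom_sum_eq hx]
      have hxn : (a * ω ^ m) ^ n = a ^ n := by
        rw [mul_pow, ← pow_mul, mul_comm m n, pow_mul, hωn, one_pow, mul_one]
      rw [hxn]
      have h1 : (1 : ℂ) - a * ω ^ m ≠ 0 := hne m
      have h2 : a * ω ^ m - 1 ≠ 0 := fun h => h1 (by rw [← neg_sub] at h; simpa using neg_eq_zero.mp h)
      field_simp
      ring
    rw [Finset.sum_congr rfl hterm, Finset.sum_comm]
    have hinner : ∀ i ∈ range n, ∑ m ∈ range n, (a * ω ^ m) ^ i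
        = if i = 0 then (n : ℂ) else 0 := by
      intro i hi
      rw [mem_range] at hi
      by_cases h0 : i = 0
      · simp [h0]
      · simp only [h0, if_false]
        have : ∀ m ∈ range n, (a * ω ^ m) ^ i = a ^ i * (ω ^ i) ^ m := by
          intro m _; rw [mul_pow, ← pow_mul, ← pow_mul, mul_comm m i]
        rw [Finset.sum_congr rfl this, ← Finset.mul_sum]
        have hωi : ω ^ i ≠ 1 := by
          intro h
          rw [hωdef, ← hω i] at h
          rw [cexpI, Complex.exp_eq_one_iff] at h
          obtain ⟨k, hk⟩ := h
          have hk2 : ((2 * π * i / n : ℝ) : ℂ) * Complex.I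
              = ((k * (2 * π) : ℝ) : ℂ) * Complex.I := by
            push_cast at hk ⊢
            linear_combination hk
          have hreal : 2 * π * i / n = k * (2 * π) := by
            have := mul_right_cancel₀ Complex.I_ne_zero hk2
            exact_mod_cast this
          have hn0 : (n:ℝ) ≠ 0 := Nat.cast_ne_zero.mpr hn.ne'
          have h2π : (2*π) ≠ 0 := by positivity
          have hreal' : 2 * π * (i:ℝ) = (k:ℝ) * (2 * π) * n := by
            field_simp at hreal; rw [hreal]; ring
          have h1' : (2*π) * (i:ℝ) = (2*π) * ((k:ℝ) * n) := by linear_combination hreal'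
          have hi' : (i:ℝ) = (k:ℝ) * n := mul_left_cancel₀ h2π h1'
          have hkn : (i : ℤ) = k * n := by exact_mod_cast hi'
          have hdvd : (n : ℤ) ∣ (i : ℤ) := ⟨k, by linarith [hkn]⟩
          have hdvd' : n ∣ i := by exact_mod_cast hdvd
          have := Nat.le_of_dvd (Nat.pos_of_ne_zero h0) hdvd'
          omega
        rw [geom_sum_eq hωi, ← pow_mul, mul_comm i n, pow_mul, hωn, one_pow]
        simp
    rw [Finset.sum_congr rfl hinner]
    simp [hn.ne']
  have h1 : (1 : ℂ) - a ^ n ≠ 0 := sub_ne_zero.mpr (Ne.symm han)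
  rw [eq_div_iff h1]
  linear_combination key

noncomputable def cAng (ψ : ℂ) (δ : ℝ) : ℝ :=
  (1 / (4 * π ^ 2)) * (1 - ‖ψ‖ ^ 2) / ‖1 - ψ * cexpI δ‖ ^ 2

lemma poisson_pt (z : ℂ) (hz : ‖z‖ < 1) :
    (1 - ‖z‖ ^ 2) / ‖1 - z‖ ^ 2 = 2 * ((1 - z)⁻¹).re - 1 := by
  have h1 : (1:ℂ) - z ≠ 0 := by
    intro h; rw [sub_eq_zero] at h; rw [← h] at hz; simp at hz
  have h2 : Complex.normSq (1 - z) ≠ 0 := by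
    simpa [Complex.normSq_eq_zero] using h1
  rw [Complex.sq_norm, Complex.sq_norm, Complex.inv_re]
  simp only [Complex.normSq_apply, Complex.sub_re, Complex.sub_im, Complex.one_re,
    Complex.one_im] at h2 ⊢
  have hdd : ((1 - z.re) * (1 - z.re) + (0 - z.im) * (0 - z.im))
      * ((1 - z.re) * (1 - z.re) + (0 - z.im) * (0 - z.im))⁻¹ = 1 := mul_inv_cancel₀ h2
  linear_combination -hdd

lemma cAng_nonneg (ψ : ℂ) (hψ : ‖ψ‖ ≤ 1) (δ : ℝ) : 0 ≤ cAng ψ δ := by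
  unfold cAng
  have h1 : 0 ≤ 1 - ‖ψ‖ ^ 2 := by nlinarith [norm_nonneg ψ]
  positivity

lemma key_sum (ψ : ℂ) (hψ : ‖ψ‖ < 1) (n : ℕ) (hn : 0 < n) (δ : ℝ) :
    ∑ m ∈ range n, cAng ψ ((δ + 2 * π * m) / n) = n * cAng (ψ ^ n) δ := by
  have hn0 : (n:ℝ) ≠ 0 := Nat.cast_ne_zero.mpr hn.ne'
  set a := ψ * cexpI (δ / n) with hadef
  have haψ : ‖a‖ = ‖ψ‖ := by rw [norm_mul, cexpI_abs, mul_one]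
  have ha : ‖a‖ < 1 := by rw [haψ]; exact hψ
  have haexp : ∀ m : ℕ, ψ * cexpI ((δ + 2 * π * m) / n) = a * cexpI (2 * π * m / n) := by
    intro m
    have h : (δ + 2 * π * m) / n = δ / n + 2 * π * m / n := by ring
    rw [h, cexpI_add, hadef]; ring
  have han : a ^ n = ψ ^ n * cexpI δ := by
    rw [hadef, mul_pow, ← cexpI_nat_mul]
    congr 2
    field_simp
  have habsan : ‖a ^ n‖ = ‖ψ ^ n‖ := by
    rw [han, norm_mul, cexpI_abs, mul_one]
  have hanlt : ‖a ^ n‖ < 1 := by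
    rw [norm_pow, haψ]
    exact pow_lt_one₀ (norm_nonneg ψ) hψ hn.ne'
  have hterm : ∀ m ∈ range n, cAng ψ ((δ + 2 * π * m) / n)
      = (1 / (4 * π ^ 2)) * (2 * ((1 - a * cexpI (2 * π * m / n))⁻¹).re - 1) := by
    intro m _
    have hz : ‖a * cexpI (2 * π * m / n)‖ < 1 := by
      rw [norm_mul, cexpI_abs, mul_one]; exact ha
    rw [cAng, haexp m, mul_div_assoc]
    congr 1
    rw [← poisson_pt _ hz, norm_mul, cexpI_abs, mul_one, haψ]
  rw [Finset.sum_congr rfl hterm]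
  have hsum := sum_inv_one_sub n hn a ha
  have hre : ∑ m ∈ range n, ((1 - a * cexpI (2 * π * m / n))⁻¹).re
      = ((n : ℂ) / (1 - a ^ n)).re := by
    rw [← hsum, Complex.re_sum]
  have hre2 : ((n : ℂ) / (1 - a ^ n)).re = n * ((1 - a ^ n)⁻¹).re := by
    rw [div_eq_mul_inv]
    simp [Complex.mul_re]
  calc ∑ m ∈ range n, (1 / (4 * π ^ 2)) * (2 * ((1 - a * cexpI (2 * π * m / n))⁻¹).re - 1)
      = (1 / (4 * π ^ 2)) * (2 * (∑ m ∈ range n, ((1 - a * cexpI (2 * π * m / n))⁻¹).re) - n) := by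
        rw [← Finset.mul_sum]
        congr 1
        rw [Finset.sum_sub_distrib, ← Finset.mul_sum]
        simp
    _ = (1 / (4 * π ^ 2)) * (2 * ((n:ℝ) * ((1 - a ^ n)⁻¹).re) - n) := by rw [hre, hre2]
    _ = n * cAng (ψ ^ n) δ := by
        have hc : cAng (ψ ^ n) δ = (1 / (4 * π ^ 2)) * (2 * ((1 - a ^ n)⁻¹).re - 1) := by
          rw [cAng, ← han, ← habsan, mul_div_assoc, ← poisson_pt _ hanlt]
        rw [hc]; ring

lemma cexpI_two_pi_one : cexpI (2 * π) = 1 := by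
  have := cexpI_two_pi 1
  simpa using this

lemma cAng_periodic (ψ : ℂ) (x : ℝ) : cAng ψ (x + 2 * π) = cAng ψ x := by
  unfold cAng
  rw [cexpI_add, cexpI_two_pi_one, mul_one]

lemma sum_shift (n : ℕ) (F : ℤ → ℝ) (hF : ∀ m : ℤ, F (m + n) = F m) (j : ℕ) :
    ∑ k ∈ range n, F ((k : ℤ) - j) = ∑ k ∈ range n, F k := by
  induction j with
  | zero => simp
  | succ j ih =>
    rw [← ih]
    rcases n with _ | m
    · simp
    · push_cast
      rw [Finset.sum_range_succ' (fun k => F ((k : ℤ) - (j+1))) m,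
        Finset.sum_range_succ (fun k => F ((k : ℤ) - j)) m]
      congr 1
      · apply Finset.sum_congr rfl
        intro k _
        congr 1
        push_cast; ring
      · have := hF (-(j+1) : ℤ)
        have h1 : (-(j+1) : ℤ) + (m+1 : ℕ) = (m : ℤ) - j := by push_cast; ring
        rw [h1] at this
        rw [this]
        congr 1

lemma double_sum (ψ : ℂ) (hψ : ‖ψ‖ < 1) (n : ℕ) (hn : 0 < n) (δ : ℝ) :
    ∑ j ∈ range n, ∑ k ∈ range n, cAng ψ ((δ + 2 * π * ((k : ℤ) - j)) / n)
      = (n : ℝ) ^ 2 * cAng (ψ ^ n) δ := by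
  have hn0 : (n:ℝ) ≠ 0 := Nat.cast_ne_zero.mpr hn.ne'
  set F : ℤ → ℝ := fun m => cAng ψ ((δ + 2 * π * m) / n) with hFdef
  have hF : ∀ m : ℤ, F (m + n) = F m := by
    intro m
    simp only [hFdef]
    have h : (δ + 2 * π * (m + n : ℤ)) / n = (δ + 2 * π * m) / n + 2 * π := by
      push_cast; field_simp; ring
    rw [h, cAng_periodic]
  have hkey : ∑ k ∈ range n, F k = n * cAng (ψ ^ n) δ := by
    have := key_sum ψ hψ n hn δ
    rw [← this]
    apply Finset.sum_congr rfl
    intro k _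
    simp only [hFdef]
    norm_num
  calc ∑ j ∈ range n, ∑ k ∈ range n, cAng ψ ((δ + 2 * π * ((k : ℤ) - j)) / n)
      = ∑ j ∈ range n, ∑ k ∈ range n, F ((k:ℤ) - j) := by
        refine Finset.sum_congr rfl fun j _ => Finset.sum_congr rfl fun k _ => ?_
        simp only [hFdef]
        push_cast
        ring_nf
    _ = ∑ j ∈ range n, ∑ k ∈ range n, F k := by
        apply Finset.sum_congr rfl
        intro j _
        exact sum_shift n F hF j
    _ = (n:ℝ) * (∑ k ∈ range n, F k) := by rw [Finset.sum_const, card_range, nsmul_eq_mul]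
    _ = (n:ℝ)^2 * cAng (ψ^n) δ := by rw [hkey]; ring

open MeasureTheory ENNReal

lemma dsum_ennreal (ψ : ℂ) (hψ : ‖ψ‖ < 1) (n : ℕ) (hn : 0 < n) (δ : ℝ) :
    ((n : ℝ≥0∞) ^ 2)⁻¹ * ∑ j ∈ range n, ∑ k ∈ range n,
        ENNReal.ofReal (cAng ψ ((δ + 2 * π * ((k : ℤ) - j)) / n))
      = ENNReal.ofReal (cAng (ψ ^ n) δ) := by
  have hnn : ∀ x, 0 ≤ cAng ψ x := cAng_nonneg ψ hψ.le
  have h1 : ∑ j ∈ range n, ∑ k ∈ range n,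
      ENNReal.ofReal (cAng ψ ((δ + 2 * π * ((k : ℤ) - j)) / n))
      = ENNReal.ofReal ((n : ℝ) ^ 2 * cAng (ψ ^ n) δ) := by
    rw [← double_sum ψ hψ n hn δ]
    rw [ENNReal.ofReal_sum_of_nonneg (fun j _ => Finset.sum_nonneg fun k _ => hnn _)]
    exact Finset.sum_congr rfl fun j _ =>
      (ENNReal.ofReal_sum_of_nonneg (fun k _ => hnn _)).symm
  rw [h1, ENNReal.ofReal_mul (by positivity)]
  have h2 : ENNReal.ofReal ((n : ℝ) ^ 2) = (n : ℝ≥0∞) ^ 2 := by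
    rw [ENNReal.ofReal_pow (by positivity)]
    norm_num
  rw [h2, ← mul_assoc, ENNReal.inv_mul_cancel, one_mul]
  · positivity
  · exact ENNReal.pow_ne_top (natCast_ne_top n)

lemma measurable_cexpI : Measurable cexpI := by
  unfold cexpI; fun_prop

lemma continuous_cexpI : Continuous cexpI := by
  unfold cexpI; fun_prop

lemma measurable_cAng (ψ : ℂ) : Measurable (cAng ψ) := by
  unfold cAng
  apply Measurable.div
  · measurability
  · apply Measurable.pow _ measurable_const
    exact (continuous_norm.comp (continuous_const.sub (continuous_const.mul continuous_cexpI))).measurable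

/-- substitution lemma in 1D -/
lemma sub1d (f : ℝ → ℝ≥0∞) (hf : Measurable f) (n : ℕ) (hn : 0 < n) :
    ∫⁻ θ in Set.Ioc 0 (2 * π), f ((n : ℝ) * θ)
      = (n : ℝ≥0∞)⁻¹ * ∑ k ∈ range n, ∫⁻ x in Set.Ioc 0 (2 * π), f (x + 2 * π * k) := by
  have hnpos : (0:ℝ) < n := Nat.cast_pos.mpr hn
  have hn0 : (n:ℝ) ≠ 0 := hnpos.ne'
  -- step 1: rescale
  have hmap : Measure.map ((n : ℝ) * ·) (volume.restrict (Set.Ioc 0 (2 * π)))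
      = ENNReal.ofReal ((n:ℝ)⁻¹) • volume.restrict (Set.Ioc 0 (2 * π * n)) := by
    have hpre : ((n : ℝ) * ·) ⁻¹' (Set.Ioc 0 (2 * π * n)) = Set.Ioc 0 (2 * π) := by
      rw [Set.preimage_const_mul_Ioc₀ _ _ hnpos]
      rw [zero_div]
      congr 1
      field_simp
    calc Measure.map ((n : ℝ) * ·) (volume.restrict (Set.Ioc 0 (2 * π)))
        = Measure.map ((n : ℝ) * ·)
            (volume.restrict (((n : ℝ) * ·) ⁻¹' (Set.Ioc 0 (2 * π * n)))) := by rw [hpre]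
      _ = (Measure.map ((n : ℝ) * ·) volume).restrict (Set.Ioc 0 (2 * π * n)) :=
            (Measure.restrict_map (measurable_const_mul _) measurableSet_Ioc).symm
      _ = (ENNReal.ofReal |(n:ℝ)⁻¹| • volume).restrict (Set.Ioc 0 (2 * π * n)) := by
            rw [Real.map_volume_mul_left hn0]
      _ = ENNReal.ofReal ((n:ℝ)⁻¹) • volume.restrict (Set.Ioc 0 (2 * π * n)) := by
            rw [Measure.restrict_smul, abs_of_pos (by positivity)]
  have step1 : ∫⁻ θ in Set.Ioc 0 (2 * π), f ((n : ℝ) * θ)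
      = ENNReal.ofReal ((n:ℝ)⁻¹) * ∫⁻ x in Set.Ioc 0 (2 * π * n), f x := by
    rw [← lintegral_map hf (measurable_const_mul _), hmap, lintegral_smul_measure, smul_eq_mul]
  -- step 2: split into n intervals
  have step2 : ∀ m : ℕ, ∫⁻ x in Set.Ioc 0 (2 * π * m), f x
      = ∑ k ∈ range m, ∫⁻ x in Set.Ioc (2 * π * k) (2 * π * (k + 1)), f x := by
    intro m
    induction m with
    | zero => simp
    | succ m ih =>
      have hsplit : Set.Ioc (0:ℝ) (2 * π * (m+1))
          = Set.Ioc 0 (2 * π * m) ∪ Set.Ioc (2 * π * m) (2 * π * (m+1)) := by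
        rw [Set.Ioc_union_Ioc_eq_Ioc (by positivity) (by nlinarith [Real.pi_pos])]
      push_cast
      rw [hsplit, lintegral_union measurableSet_Ioc (Set.Ioc_disjoint_Ioc_of_le le_rfl),
        Finset.sum_range_succ, ← ih]
  -- step 3: translate each interval
  have step3 : ∀ k : ℕ, ∫⁻ x in Set.Ioc (2 * π * k) (2 * π * (k + 1)), f x
      = ∫⁻ x in Set.Ioc 0 (2 * π), f (x + 2 * π * k) := by
    intro k
    have hmap2 : Measure.map (· + 2 * π * (k:ℝ)) (volume.restrict (Set.Ioc 0 (2 * π)))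
        = volume.restrict (Set.Ioc (2 * π * k) (2 * π * (k + 1))) := by
      have hpre : (· + 2 * π * (k:ℝ)) ⁻¹' (Set.Ioc (2 * π * k) (2 * π * (k+1)))
          = Set.Ioc 0 (2 * π) := by
        rw [Set.preimage_add_const_Ioc]
        congr 1 <;> ring
      calc Measure.map (· + 2 * π * (k:ℝ)) (volume.restrict (Set.Ioc 0 (2 * π)))
          = Measure.map (· + 2 * π * (k:ℝ))
              (volume.restrict ((· + 2 * π * (k:ℝ)) ⁻¹' (Set.Ioc (2 * π * k) (2 * π * (k+1))))) := by
            rw [hpre]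
        _ = (Measure.map (· + 2 * π * (k:ℝ)) volume).restrict
              (Set.Ioc (2 * π * k) (2 * π * (k+1))) :=
            (Measure.restrict_map (measurable_add_const _) measurableSet_Ioc).symm
        _ = volume.restrict (Set.Ioc (2 * π * k) (2 * π * (k+1))) := by
            rw [map_add_right_eq_self]
    rw [← hmap2, lintegral_map hf (measurable_add_const _)]
  rw [step1, step2 n]
  rw [Finset.sum_congr rfl fun k _ => step3 k]
  congr 1
  rw [ENNReal.ofReal_inv_of_pos hnpos]
  congr 1
  simp [ENNReal.ofReal_natCast]

noncomputable abbrev ΛI : Measure ℝ := volume.restrict (Set.Ioc 0 (2 * π))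

lemma core (ψ : ℂ) (hψ : ‖ψ‖ < 1) (n : ℕ) (hn : 0 < n)
    (f : ℂ × ℂ → ℝ≥0∞) (hf : Measurable f) :
    ∫⁻ q : ℝ × ℝ, f (cexpI ((n:ℝ) * q.1), cexpI ((n:ℝ) * q.2))
        * ENNReal.ofReal (cAng ψ (q.2 - q.1)) ∂(ΛI.prod ΛI)
      = ∫⁻ q : ℝ × ℝ, f (cexpI q.1, cexpI q.2)
        * ENNReal.ofReal (cAng (ψ ^ n) (q.2 - q.1)) ∂(ΛI.prod ΛI) := by
  have hnpos : (0:ℝ) < n := Nat.cast_pos.mpr hn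
  have hn0 : (n:ℝ) ≠ 0 := hnpos.ne'
  have hA : ∀ (k : ℕ), Measurable (Function.uncurry fun θ x =>
      f (cexpI ((n:ℝ) * θ), cexpI x) * ENNReal.ofReal (cAng ψ ((x + 2*π*k)/n - θ))) := by
    intro k
    apply Measurable.mul
    · exact hf.comp ((measurable_cexpI.comp ((measurable_const_mul _).comp measurable_fst)).prodMk
        (measurable_cexpI.comp measurable_snd))
    · exact ENNReal.measurable_ofReal.comp ((measurable_cAng ψ).comp
        (((measurable_snd.add_const _).div_const _).sub measurable_fst))
  have hB : ∀ (j k : ℕ), Measurable (Function.uncurry fun x y =>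
      f (cexpI y, cexpI x) * ENNReal.ofReal (cAng ψ ((x - y + 2*π*((k:ℤ) - j))/n))) := by
    intro j k
    apply Measurable.mul
    · exact hf.comp ((measurable_cexpI.comp measurable_snd).prodMk
        (measurable_cexpI.comp measurable_fst))
    · exact ENNReal.measurable_ofReal.comp ((measurable_cAng ψ).comp
        ((((measurable_fst.sub measurable_snd).add_const _).div_const _)))
  have hMy : ∀ (j k : ℕ), Measurable fun x : ℝ => ∫⁻ y, f (cexpI y, cexpI x)
      * ENNReal.ofReal (cAng ψ ((x - y + 2*π*((k:ℤ) - j))/n)) ∂ΛI :=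
    fun j k => (hB j k).lintegral_prod_right'
  have hBy : ∀ (j k : ℕ) (x : ℝ), Measurable fun y : ℝ => f (cexpI y, cexpI x)
      * ENNReal.ofReal (cAng ψ ((x - y + 2*π*((k:ℤ) - j))/n)) := by
    intro j k x
    apply Measurable.mul
    · exact hf.comp (measurable_cexpI.prodMk measurable_const)
    · exact ENNReal.measurable_ofReal.comp ((measurable_cAng ψ).comp
        ((((measurable_const.sub measurable_id).add_const _).div_const _)))
  have hint1 : Measurable fun q : ℝ × ℝ =>
      f (cexpI ((n:ℝ) * q.1), cexpI ((n:ℝ) * q.2)) * ENNReal.ofReal (cAng ψ (q.2 - q.1)) := by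
    apply Measurable.mul
    · exact hf.comp ((measurable_cexpI.comp ((measurable_const_mul _).comp measurable_fst)).prodMk
        (measurable_cexpI.comp ((measurable_const_mul _).comp measurable_snd)))
    · exact ENNReal.measurable_ofReal.comp ((measurable_cAng ψ).comp
        (measurable_snd.sub measurable_fst))
  have hint2 : Measurable fun q : ℝ × ℝ =>
      f (cexpI q.1, cexpI q.2) * ENNReal.ofReal (cAng (ψ^n) (q.2 - q.1)) := by
    apply Measurable.mul
    · exact hf.comp ((measurable_cexpI.comp measurable_fst).prodMk
        (measurable_cexpI.comp measurable_snd))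
    · exact ENNReal.measurable_ofReal.comp ((measurable_cAng (ψ^n)).comp
        (measurable_snd.sub measurable_fst))
  have hsq : (n : ℝ≥0∞)⁻¹ * (n : ℝ≥0∞)⁻¹ = ((n : ℝ≥0∞) ^ 2)⁻¹ := by
    rw [pow_two, ENNReal.mul_inv (Or.inl (by simp [hn.ne'])) (Or.inl (natCast_ne_top n))]
  calc ∫⁻ q : ℝ × ℝ, f (cexpI ((n:ℝ) * q.1), cexpI ((n:ℝ) * q.2))
        * ENNReal.ofReal (cAng ψ (q.2 - q.1)) ∂(ΛI.prod ΛI)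
      = ∫⁻ θ, ∫⁻ φ, f (cexpI ((n:ℝ) * θ), cexpI ((n:ℝ) * φ))
          * ENNReal.ofReal (cAng ψ (φ - θ)) ∂ΛI ∂ΛI := by
        rw [MeasureTheory.lintegral_prod _ hint1.aemeasurable]
    _ = ∫⁻ θ, (n : ℝ≥0∞)⁻¹ * ∑ k ∈ range n, ∫⁻ x,
          f (cexpI ((n:ℝ) * θ), cexpI x)
            * ENNReal.ofReal (cAng ψ ((x + 2*π*k)/n - θ)) ∂ΛI ∂ΛI := by
        apply lintegral_congr
        intro θ
        have hg : Measurable fun x : ℝ => f (cexpI ((n:ℝ)*θ), cexpI x)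
            * ENNReal.ofReal (cAng ψ (x/n - θ)) := by
          apply Measurable.mul
          · exact hf.comp (measurable_const.prodMk measurable_cexpI)
          · exact ENNReal.measurable_ofReal.comp ((measurable_cAng ψ).comp
              ((measurable_id.div_const _).sub_const _))
        have h1 : ∀ φ : ℝ, f (cexpI ((n:ℝ) * θ), cexpI ((n:ℝ) * φ))
            * ENNReal.ofReal (cAng ψ (φ - θ))
            = (fun x => f (cexpI ((n:ℝ)*θ), cexpI x) * ENNReal.ofReal (cAng ψ (x/n - θ)))
              ((n:ℝ) * φ) := by
          intro φ
          congr 3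
          field_simp
        rw [lintegral_congr h1, sub1d _ hg n hn]
        congr 1
        apply Finset.sum_congr rfl
        intro k _
        apply lintegral_congr
        intro x
        rw [cexpI_periodic]
    _ = (n : ℝ≥0∞)⁻¹ * ∑ k ∈ range n, ∫⁻ θ, ∫⁻ x,
          f (cexpI ((n:ℝ) * θ), cexpI x)
            * ENNReal.ofReal (cAng ψ ((x + 2*π*k)/n - θ)) ∂ΛI ∂ΛI := by
        rw [lintegral_const_mul]
        · congr 1
          rw [lintegral_finset_sum]
          intro k _
          exact (hA k).lintegral_prod_right'
        · apply Finset.measurable_sum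
          intro k _
          exact (hA k).lintegral_prod_right'
    _ = (n : ℝ≥0∞)⁻¹ * ∑ k ∈ range n, ∫⁻ x, ∫⁻ θ,
          f (cexpI ((n:ℝ) * θ), cexpI x)
            * ENNReal.ofReal (cAng ψ ((x + 2*π*k)/n - θ)) ∂ΛI ∂ΛI := by
        congr 1
        apply Finset.sum_congr rfl
        intro k _
        exact lintegral_lintegral_swap (hA k).aemeasurable
    _ = (n : ℝ≥0∞)⁻¹ * ∑ k ∈ range n, ∫⁻ x, (n : ℝ≥0∞)⁻¹ * ∑ j ∈ range n, ∫⁻ y,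
          f (cexpI y, cexpI x)
            * ENNReal.ofReal (cAng ψ ((x - y + 2*π*((k:ℤ) - j))/n)) ∂ΛI ∂ΛI := by
        congr 1
        apply Finset.sum_congr rfl
        intro k _
        apply lintegral_congr
        intro x
        have hh : Measurable fun y : ℝ => f (cexpI y, cexpI x)
            * ENNReal.ofReal (cAng ψ ((x + 2*π*k)/n - y/n)) := by
          apply Measurable.mul
          · exact hf.comp (measurable_cexpI.prodMk measurable_const)
          · exact ENNReal.measurable_ofReal.comp ((measurable_cAng ψ).comp
              (measurable_const.sub (measurable_id.div_const _)))
        have h1 : ∀ θ : ℝ, f (cexpI ((n:ℝ) * θ), cexpI x)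
            * ENNReal.ofReal (cAng ψ ((x + 2*π*k)/n - θ))
            = (fun y => f (cexpI y, cexpI x)
                * ENNReal.ofReal (cAng ψ ((x + 2*π*k)/n - y/n))) ((n:ℝ) * θ) := by
          intro θ
          congr 3
          field_simp
        rw [lintegral_congr h1, sub1d _ hh n hn]
        congr 1
        apply Finset.sum_congr rfl
        intro j _
        apply lintegral_congr
        intro y
        rw [cexpI_periodic]
        congr 3
        push_cast
        ring
    _ = ((n : ℝ≥0∞) ^ 2)⁻¹ * ∑ k ∈ range n, ∑ j ∈ range n, ∫⁻ x, ∫⁻ y,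
          f (cexpI y, cexpI x)
            * ENNReal.ofReal (cAng ψ ((x - y + 2*π*((k:ℤ) - j))/n)) ∂ΛI ∂ΛI := by
        rw [Finset.mul_sum, Finset.mul_sum]
        apply Finset.sum_congr rfl
        intro k _
        rw [lintegral_const_mul _ (Finset.measurable_sum _ (fun j _ => hMy j k)),
          lintegral_finset_sum _ (fun j _ => hMy j k), ← mul_assoc, hsq]
    _ = ((n : ℝ≥0∞) ^ 2)⁻¹ * ∫⁻ x, ∑ j ∈ range n, ∑ k ∈ range n, ∫⁻ y,
          f (cexpI y, cexpI x)
            * ENNReal.ofReal (cAng ψ ((x - y + 2*π*((k:ℤ) - j))/n)) ∂ΛI ∂ΛI := by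
        rw [Finset.sum_comm]
        congr 1
        calc ∑ j ∈ range n, ∑ k ∈ range n, ∫⁻ x, ∫⁻ y,
              f (cexpI y, cexpI x)
                * ENNReal.ofReal (cAng ψ ((x - y + 2*π*((k:ℤ) - j))/n)) ∂ΛI ∂ΛI
            = ∑ j ∈ range n, ∫⁻ x, ∑ k ∈ range n, ∫⁻ y,
              f (cexpI y, cexpI x)
                * ENNReal.ofReal (cAng ψ ((x - y + 2*π*((k:ℤ) - j))/n)) ∂ΛI ∂ΛI :=
              Finset.sum_congr rfl fun j _ =>
                (lintegral_finset_sum _ (fun k _ => hMy j k)).symm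
          _ = _ := (lintegral_finset_sum _ (fun j _ =>
                Finset.measurable_sum _ (fun k _ => hMy j k))).symm
    _ = ∫⁻ x, ∫⁻ y, f (cexpI y, cexpI x)
          * ENNReal.ofReal (cAng (ψ^n) (x - y)) ∂ΛI ∂ΛI := by
        rw [← lintegral_const_mul _ (Finset.measurable_sum _ (fun j _ =>
          Finset.measurable_sum _ (fun k _ => hMy j k)))]
        apply lintegral_congr
        intro x
        have e1 : ∀ j ∈ range n, ∑ k ∈ range n, ∫⁻ y,
            f (cexpI y, cexpI x)
              * ENNReal.ofReal (cAng ψ ((x - y + 2*π*((k:ℤ) - j))/n)) ∂ΛI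
            = ∫⁻ y, ∑ k ∈ range n, f (cexpI y, cexpI x)
              * ENNReal.ofReal (cAng ψ ((x - y + 2*π*((k:ℤ) - j))/n)) ∂ΛI :=
          fun j _ => (lintegral_finset_sum _ (fun k _ => hBy j k x)).symm
        rw [Finset.sum_congr rfl e1,
          ← lintegral_finset_sum _ (fun j _ => Finset.measurable_sum _
            (fun k _ => hBy j k x)),
          ← lintegral_const_mul _ (Finset.measurable_sum _ (fun j _ =>
            Finset.measurable_sum _ (fun k _ => hBy j k x)))]
        apply lintegral_congr
        intro y
        have e2 : ∀ j ∈ range n, ∑ k ∈ range n, f (cexpI y, cexpI x)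
            * ENNReal.ofReal (cAng ψ ((x - y + 2*π*((k:ℤ) - j))/n))
            = f (cexpI y, cexpI x) * ∑ k ∈ range n,
              ENNReal.ofReal (cAng ψ ((x - y + 2*π*((k:ℤ) - j))/n)) :=
          fun j _ => (Finset.mul_sum _ _ _).symm
        rw [Finset.sum_congr rfl e2, ← Finset.mul_sum, mul_left_comm,
          dsum_ennreal ψ hψ n hn (x - y)]
    _ = ∫⁻ q : ℝ × ℝ, f (cexpI q.1, cexpI q.2)
        * ENNReal.ofReal (cAng (ψ ^ n) (q.2 - q.1)) ∂(ΛI.prod ΛI) := by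
        rw [MeasureTheory.lintegral_prod _ hint2.aemeasurable]
        exact (lintegral_lintegral_swap hint2.aemeasurable).symm

lemma circleMeasure_eq : circleMeasure = Measure.map cexpI ΛI := rfl

lemma measurable_bcDensity (ψ : ℂ) : Measurable (bcDensity ψ) := by
  unfold bcDensity
  apply Measurable.div measurable_const
  apply Measurable.pow _ measurable_const
  apply continuous_norm.measurable.comp
  exact measurable_const.sub ((measurable_const.mul measurable_snd).mul
    (continuous_star.measurable.comp measurable_fst))

lemma bcDensity_comp (ψ : ℂ) (θ φ : ℝ) :
    bcDensity ψ (cexpI θ, cexpI φ) = cAng ψ (φ - θ) := by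
  unfold bcDensity cAng
  have h : ψ * cexpI φ * (starRingEnd ℂ) (cexpI θ) = ψ * cexpI (φ - θ) := by
    have hconj : (starRingEnd ℂ) (cexpI θ) = cexpI (-θ) := by
      unfold cexpI
      rw [← Complex.exp_conj]
      congr 1
      simp [Complex.conj_I]
    rw [hconj, mul_assoc, ← cexpI_add]
    ring_nf
  rw [h]

lemma bcDensity_nonneg (ψ : ℂ) (hψ : ‖ψ‖ ≤ 1) (p : ℂ × ℂ) : 0 ≤ bcDensity ψ p := by
  unfold bcDensity
  have h1 : 0 ≤ 1 - ‖ψ‖ ^ 2 := by nlinarith [norm_nonneg ψ]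
  positivity

/-- withDensity of a mapped measure -/
lemma withDensity_map_eq {α β : Type*} [MeasurableSpace α] [MeasurableSpace β]
    (μ : Measure α) (F : α → β) (hF : Measurable F) (g : β → ℝ≥0∞) (hg : Measurable g) :
    (Measure.map F μ).withDensity g = Measure.map F (μ.withDensity (g ∘ F)) := by
  ext s hs
  rw [withDensity_apply _ hs, Measure.map_apply hF hs, withDensity_apply _ (hF hs),
    setLIntegral_map hs hg hF]
  rfl

lemma BCplus_eq (ψ : ℂ) :
    BCplus ψ = Measure.map (fun q : ℝ × ℝ => (cexpI q.1, cexpI q.2))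
      ((ΛI.prod ΛI).withDensity (fun q => ENNReal.ofReal (cAng ψ (q.2 - q.1)))) := by
  have hE : Measurable fun q : ℝ × ℝ => (cexpI q.1, cexpI q.2) :=
    (measurable_cexpI.comp measurable_fst).prodMk (measurable_cexpI.comp measurable_snd)
  have h1 : circleMeasure.prod circleMeasure
      = Measure.map (fun q : ℝ × ℝ => (cexpI q.1, cexpI q.2)) (ΛI.prod ΛI) := by
    rw [circleMeasure_eq, Measure.map_prod_map _ _ measurable_cexpI measurable_cexpI]
    rfl
  have hgm : Measurable fun p : ℂ × ℂ => ENNReal.ofReal (bcDensity ψ p) :=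
    ENNReal.measurable_ofReal.comp (measurable_bcDensity ψ)
  rw [BCplus, h1, withDensity_map_eq _ _ hE _ hgm]
  refine congrArg (Measure.map _) (congrArg _ (funext fun q => ?_))
  simp only [Function.comp_apply]
  rw [bcDensity_comp]

lemma map_pow_BCplus (ψ : ℂ) (hψ : ‖ψ‖ < 1) (n : ℕ) (hn : 0 < n) :
    Measure.map (fun p : ℂ × ℂ => (p.1 ^ n, p.2 ^ n)) (BCplus ψ) = BCplus (ψ ^ n) := by
  have hE : Measurable fun q : ℝ × ℝ => (cexpI q.1, cexpI q.2) :=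
    (measurable_cexpI.comp measurable_fst).prodMk (measurable_cexpI.comp measurable_snd)
  have hPow : Measurable fun p : ℂ × ℂ => (p.1 ^ n, p.2 ^ n) :=
    (measurable_fst.pow_const n).prodMk (measurable_snd.pow_const n)
  rw [BCplus_eq ψ, BCplus_eq (ψ ^ n), Measure.map_map hPow hE]
  have hcomp : ((fun p : ℂ × ℂ => (p.1 ^ n, p.2 ^ n)) ∘ fun q : ℝ × ℝ => (cexpI q.1, cexpI q.2))
      = fun q : ℝ × ℝ => (cexpI ((n:ℝ) * q.1), cexpI ((n:ℝ) * q.2)) := by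
    funext q
    simp [Function.comp, cexpI_nat_mul]
  rw [hcomp]
  ext s hs
  have hmq : Measurable fun q : ℝ × ℝ => (cexpI ((n:ℝ) * q.1), cexpI ((n:ℝ) * q.2)) :=
    (measurable_cexpI.comp ((measurable_const_mul _).comp measurable_fst)).prodMk
      (measurable_cexpI.comp ((measurable_const_mul _).comp measurable_snd))
  rw [Measure.map_apply hmq hs, Measure.map_apply hE hs,
    withDensity_apply _ (hmq hs), withDensity_apply _ (hE hs)]
  have hind : Measurable (s.indicator (fun _ : ℂ × ℂ => (1:ℝ≥0∞))) :=
    measurable_const.indicator hs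
  have key := core ψ hψ n hn (s.indicator fun _ => (1:ℝ≥0∞)) hind
  have lhs_eq : ∫⁻ q in (fun q : ℝ × ℝ => (cexpI ((n:ℝ) * q.1), cexpI ((n:ℝ) * q.2))) ⁻¹' s,
        ENNReal.ofReal (cAng ψ (q.2 - q.1)) ∂(ΛI.prod ΛI)
      = ∫⁻ q : ℝ × ℝ, (s.indicator fun _ => (1:ℝ≥0∞)) (cexpI ((n:ℝ) * q.1), cexpI ((n:ℝ) * q.2))
          * ENNReal.ofReal (cAng ψ (q.2 - q.1)) ∂(ΛI.prod ΛI) := by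
    rw [← lintegral_indicator (hmq hs)]
    apply lintegral_congr
    intro q
    by_cases hq : (cexpI ((n:ℝ) * q.1), cexpI ((n:ℝ) * q.2)) ∈ s
    · simp [Set.indicator_apply, Set.mem_preimage, hq]
    · simp [Set.indicator_apply, Set.mem_preimage, hq]
  have rhs_eq : ∫⁻ q in (fun q : ℝ × ℝ => (cexpI q.1, cexpI q.2)) ⁻¹' s,
        ENNReal.ofReal (cAng (ψ^n) (q.2 - q.1)) ∂(ΛI.prod ΛI)
      = ∫⁻ q : ℝ × ℝ, (s.indicator fun _ => (1:ℝ≥0∞)) (cexpI q.1, cexpI q.2)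
          * ENNReal.ofReal (cAng (ψ^n) (q.2 - q.1)) ∂(ΛI.prod ΛI) := by
    rw [← lintegral_indicator (hE hs)]
    apply lintegral_congr
    intro q
    by_cases hq : (cexpI q.1, cexpI q.2) ∈ s
    · simp [Set.indicator_apply, Set.mem_preimage, hq]
    · simp [Set.indicator_apply, Set.mem_preimage, hq]
  rw [lhs_eq, rhs_eq, key]


lemma cAng_lower (ψ : ℂ) (hψ : ‖ψ‖ < 1) (δ : ℝ) :
    (1 / (4 * π ^ 2)) * (1 - ‖ψ‖ ^ 2) / 4 ≤ cAng ψ δ := by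
  unfold cAng
  have h0 : (0:ℝ) ≤ ‖ψ‖ := norm_nonneg ψ
  have hπ := Real.pi_pos
  have hnum : 0 < (1 / (4 * π ^ 2)) * (1 - ‖ψ‖ ^ 2) :=
    mul_pos (by positivity) (by nlinarith)
  have hd1 : ‖1 - ψ * cexpI δ‖ ≤ 2 := by
    have h := norm_sub_le (1:ℂ) (ψ * cexpI δ)
    simp only [norm_one, norm_mul] at h
    rw [cexpI_abs, mul_one] at h
    linarith
  have hd2 : 1 - ‖ψ‖ ≤ ‖1 - ψ * cexpI δ‖ := by
    have h := norm_sub_norm_le (1:ℂ) (ψ * cexpI δ)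
    simp only [norm_one, norm_mul] at h
    rw [cexpI_abs, mul_one] at h
    linarith
  have hdpos : 0 < ‖1 - ψ * cexpI δ‖ := lt_of_lt_of_le (by linarith) hd2
  have hsq : ‖1 - ψ * cexpI δ‖ ^ 2 ≤ 4 := by nlinarith
  have hsqpos : 0 < ‖1 - ψ * cexpI δ‖ ^ 2 := by positivity
  exact div_le_div_of_nonneg_left hnum.le hsqpos hsq

lemma BCplus_ne_zero (ψ : ℂ) (hψ : ‖ψ‖ < 1) : BCplus ψ ≠ 0 := by
  have hE : Measurable fun q : ℝ × ℝ => (cexpI q.1, cexpI q.2) :=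
    (measurable_cexpI.comp measurable_fst).prodMk (measurable_cexpI.comp measurable_snd)
  rw [BCplus_eq]
  intro h
  have h0 := congrArg (fun μ : Measure (ℂ × ℂ) => μ Set.univ) h
  simp only [Measure.coe_zero, Pi.zero_apply] at h0
  rw [Measure.map_apply hE MeasurableSet.univ, Set.preimage_univ,
    withDensity_apply _ MeasurableSet.univ, Measure.restrict_univ] at h0
  set ε := (1 / (4 * π ^ 2)) * (1 - ‖ψ‖ ^ 2) / 4 with hε
  have hπ := Real.pi_pos
  have hεpos : 0 < ε := by
    rw [hε]
    refine div_pos (mul_pos (by positivity) (by nlinarith [norm_nonneg ψ])) (by norm_num)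
  have hlb : ∀ q : ℝ × ℝ, ENNReal.ofReal ε ≤ ENNReal.ofReal (cAng ψ (q.2 - q.1)) :=
    fun q => ENNReal.ofReal_le_ofReal (cAng_lower ψ hψ _)
  have hge : ENNReal.ofReal ε * (ΛI.prod ΛI) Set.univ
      ≤ ∫⁻ q, ENNReal.ofReal (cAng ψ (q.2 - q.1)) ∂(ΛI.prod ΛI) := by
    rw [← lintegral_const]
    exact lintegral_mono hlb
  rw [h0] at hge
  have hmass : (ΛI.prod ΛI) Set.univ ≠ 0 := by
    rw [← Set.univ_prod_univ, Measure.prod_prod]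
    simp only [Measure.restrict_apply_univ, Real.volume_Ioc]
    exact mul_ne_zero (ENNReal.ofReal_pos.mpr (by linarith)).ne'
      (ENNReal.ofReal_pos.mpr (by linarith)).ne'
  have hne : ENNReal.ofReal ε ≠ 0 := (ENNReal.ofReal_pos.mpr hεpos).ne'
  exact (mul_ne_zero hne hmass) (le_zero_iff.mp hge)

instance : IsFiniteMeasure circleMeasure := by
  constructor
  rw [circleMeasure_eq, Measure.map_apply measurable_cexpI MeasurableSet.univ,
    Set.preimage_univ, Measure.restrict_apply_univ, Real.volume_Ioc]
  exact ENNReal.ofReal_lt_top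

lemma ae_torus : ∀ᵐ p ∂(circleMeasure.prod circleMeasure),
    ‖p.1‖ = 1 ∧ ‖p.2‖ = 1 := by
  have hT : MeasurableSet {z : ℂ | ‖z‖ = 1} :=
    (isClosed_eq continuous_norm continuous_const).measurableSet
  have hc : circleMeasure {z : ℂ | ‖z‖ = 1}ᶜ = 0 := by
    rw [circleMeasure_eq, Measure.map_apply measurable_cexpI hT.compl]
    have hpre : cexpI ⁻¹' {z : ℂ | ‖z‖ = 1}ᶜ = ∅ := by
      ext θ
      simp [cexpI_abs]
    rw [hpre]
    simp
  rw [ae_iff]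
  have hsub : {p : ℂ × ℂ | ¬(‖p.1‖ = 1 ∧ ‖p.2‖ = 1)}
      ⊆ ({z : ℂ | ‖z‖ = 1}ᶜ ×ˢ Set.univ)
        ∪ (Set.univ ×ˢ {z : ℂ | ‖z‖ = 1}ᶜ) := by
    intro p hp
    simp only [Set.mem_setOf_eq, not_and_or] at hp
    rcases hp with hp | hp
    · exact Or.inl (Set.mk_mem_prod hp (Set.mem_univ _))
    · exact Or.inr (Set.mk_mem_prod (Set.mem_univ _) hp)
  refine measure_mono_null hsub (measure_union_null ?_ ?_)
  · rw [Measure.prod_prod, hc, zero_mul]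
  · rw [Measure.prod_prod, hc, mul_zero]

lemma integral_BCplus (ζ : ℂ) (hζ : ‖ζ‖ ≤ 1) (g : ℂ × ℂ → ℝ) :
    ∫ p, g p ∂(BCplus ζ)
      = ∫ p, bcDensity ζ p • g p ∂(circleMeasure.prod circleMeasure) := by
  rw [BCplus]
  have hd : Measurable fun p : ℂ × ℂ => Real.toNNReal (bcDensity ζ p) :=
    (measurable_bcDensity ζ).real_toNNReal
  have hrfl : (fun p : ℂ × ℂ => ENNReal.ofReal (bcDensity ζ p))
      = fun p => ((Real.toNNReal (bcDensity ζ p) : ℝ≥0∞)) := rfl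
  rw [hrfl, integral_withDensity_eq_integral_smul hd g]
  refine integral_congr_ae (Filter.Eventually.of_forall fun p => ?_)
  show (bcDensity ζ p).toNNReal • g p = bcDensity ζ p • g p
  rw [NNReal.smul_def, Real.coe_toNNReal _ (bcDensity_nonneg ζ hζ p)]

lemma tendsto_integral_BCplus (ψ : ℂ) (hψ : ‖ψ‖ < 1)
    (f : BoundedContinuousFunction (ℂ × ℂ) ℝ) :
    Filter.Tendsto (fun n : ℕ => ∫ p, f p ∂(BCplus (ψ ^ n)))
      Filter.atTop (nhds (∫ p, f p ∂(BCplus 0))) := by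
  have habs : ∀ n : ℕ, ‖ψ ^ n‖ ≤ 1 := by
    intro n
    rw [norm_pow]
    exact pow_le_one₀ (norm_nonneg ψ) hψ.le
  have hrepr : ∀ n : ℕ, ∫ p, f p ∂(BCplus (ψ ^ n))
      = ∫ p, bcDensity (ψ ^ n) p • (f p) ∂(circleMeasure.prod circleMeasure) :=
    fun n => integral_BCplus _ (habs n) f
  have h0 : ∫ p, f p ∂(BCplus 0) = ∫ p, bcDensity 0 p • (f p)
      ∂(circleMeasure.prod circleMeasure) := integral_BCplus 0 (by simp) f
  simp only [hrepr, h0]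
  set M := (1 / (4 * π ^ 2)) / (1 - ‖ψ‖) ^ 2 with hM
  have hπ := Real.pi_pos
  have hMpos : 0 ≤ M := by rw [hM]; positivity
  apply tendsto_integral_of_dominated_convergence (bound := fun _ => M * ‖f‖)
  · intro n
    exact (((measurable_bcDensity (ψ ^ n)).smul
      (f.continuous.measurable : Measurable f)).aestronglyMeasurable)
  · exact integrable_const _
  · intro n
    filter_upwards [ae_torus] with p hp
    have hfb : ‖f p‖ ≤ ‖f‖ := f.norm_coe_le_norm p
    have hden : bcDensity (ψ ^ n) p ≤ M := by
      rcases Nat.eq_zero_or_pos n with hn | hn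
      · subst hn
        unfold bcDensity
        simp only [pow_zero, norm_one]
        norm_num
        exact hMpos
      · unfold bcDensity
        rw [hM]
        have h1 : ‖ψ ^ n‖ ≤ ‖ψ‖ := by
          rw [norm_pow]
          calc ‖ψ‖ ^ n ≤ ‖ψ‖ ^ 1 :=
                pow_le_pow_of_le_one (norm_nonneg ψ) hψ.le hn
            _ = ‖ψ‖ := pow_one _
        have h2 : 1 - ‖ψ‖ ≤ ‖1 - ψ ^ n * p.2 * (starRingEnd ℂ) p.1‖ := by
          have h := norm_sub_norm_le (1 : ℂ) (ψ ^ n * p.2 * (starRingEnd ℂ) p.1)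
          simp only [norm_one, norm_mul] at h
          rw [Complex.norm_conj, hp.1, hp.2, mul_one, mul_one] at h
          linarith
        have h3 : (0:ℝ) < 1 - ‖ψ‖ := by linarith
        have h4 : 0 < ‖1 - ψ ^ n * p.2 * (starRingEnd ℂ) p.1‖ ^ 2 := by
          nlinarith
        have h5 : (1 - ‖ψ‖) ^ 2
            ≤ ‖1 - ψ ^ n * p.2 * (starRingEnd ℂ) p.1‖ ^ 2 := by nlinarith
        have hC : (0:ℝ) < 1 / (4 * π ^ 2) := by positivity
        have h6 : 1 / (4 * π ^ 2) * (1 - ‖ψ ^ n‖ ^ 2) ≤ 1 / (4 * π ^ 2) := by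
          have hx : 0 ≤ ‖ψ ^ n‖ ^ 2 := by positivity
          nlinarith [mul_nonneg hC.le hx]
        exact div_le_div₀ (by positivity) h6 (by positivity) h5
    have hdnn : 0 ≤ bcDensity (ψ ^ n) p := bcDensity_nonneg _ (habs n) p
    rw [smul_eq_mul, norm_mul, Real.norm_eq_abs, abs_of_nonneg hdnn]
    exact mul_le_mul hden hfb (norm_nonneg _) hMpos
  · refine Filter.Eventually.of_forall fun p => ?_
    have hcont : ContinuousAt (fun ζ : ℂ => bcDensity ζ p) 0 := by
      unfold bcDensity
      apply ContinuousAt.div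
      · exact (continuous_const.mul (continuous_const.sub
          ((continuous_norm.pow 2)))).continuousAt
      · exact ((continuous_norm.comp (continuous_const.sub
          ((continuous_id.mul continuous_const).mul continuous_const))).pow 2).continuousAt
      · simp
    have hψ0 : Filter.Tendsto (fun n : ℕ => ψ ^ n) Filter.atTop (nhds 0) :=
      tendsto_pow_atTop_nhds_zero_of_norm_lt_one hψ
    exact ((hcont.tendsto.comp hψ0).smul_const (f p))

/-- if `(Z_U, Z_V) ~ BC₊(ψ)` then `(Z_U^n, Z_V^n) ~ BC₊(ψ^n)` for every
positive integer `n`, and as `n → ∞` the law of `(Z_U^n, Z_V^n)` converges weakly to the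
uniform distribution on the torus (which is `BC₊(0)`). -/
theorem bcplus_powers {α : Type*} [MeasurableSpace α] (P : Measure α)
    [IsProbabilityMeasure P] (ψ : ℂ) (hψ : ‖ψ‖ < 1)
    (ZU ZV : α → ℂ)
    (hlaw : Measure.map (fun ω => (ZU ω, ZV ω)) P = BCplus ψ) :
    (∀ n : ℕ, 0 < n →
      Measure.map (fun ω => (ZU ω ^ n, ZV ω ^ n)) P = BCplus (ψ ^ n)) ∧
    (∀ f : BoundedContinuousFunction (ℂ × ℂ) ℝ,
      Filter.Tendsto
        (fun n : ℕ => ∫ p, f p ∂(Measure.map (fun ω => (ZU ω ^ n, ZV ω ^ n)) P))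
        Filter.atTop (nhds (∫ p, f p ∂(BCplus 0)))) := by
  have hae : AEMeasurable (fun ω => (ZU ω, ZV ω)) P := by
    by_contra h
    rw [Measure.map_of_not_aemeasurable h] at hlaw
    exact BCplus_ne_zero ψ hψ hlaw.symm
  have hpart1 : ∀ n : ℕ, 0 < n →
      Measure.map (fun ω => (ZU ω ^ n, ZV ω ^ n)) P = BCplus (ψ ^ n) := by
    intro n hn
    have hPow : Measurable fun p : ℂ × ℂ => (p.1 ^ n, p.2 ^ n) :=
      (measurable_fst.pow_const n).prodMk (measurable_snd.pow_const n)
    have hcomp : (fun ω => (ZU ω ^ n, ZV ω ^ n))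
        = (fun p : ℂ × ℂ => (p.1 ^ n, p.2 ^ n)) ∘ (fun ω => (ZU ω, ZV ω)) := rfl
    rw [hcomp, ← AEMeasurable.map_map_of_aemeasurable hPow.aemeasurable hae, hlaw,
      map_pow_BCplus ψ hψ n hn]
  refine ⟨hpart1, fun f => ?_⟩
  apply Filter.Tendsto.congr' _ (tendsto_integral_BCplus ψ hψ f)
  filter_upwards [Filter.eventually_ge_atTop 1] with n hn
  rw [hpart1 n hn]
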